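/- Let Γ be a compact topological group and let H be an open subgroup of Γ. Then every 𝓗-closed subgroup of Γ is an open subgroup of Γ (indeed, it contains the normal core ⋂_{g ∈ Γ} g·H·g⁻¹ of H, which is an open normal subgroup of Γ), and there are only finitely many 𝓗-closed subgroups of Γ. In particular, for any subgroup G of Γ the 𝓗-closure of G is open. -/

import Mathlib

open Pointwise

/-- Two subgroups `G`, `G'` of `Γ` are `𝓗`-equivalent (for a subgroup `H` of `Γ`, with `𝓗`
its conjugacy class) if `H·g·G = H·g·G'` as subsets of `Γ` for every `g ∈ Γ`. -/
def HConjEquiv {Γ : Type*} [Group Γ] (H G G' : Subgroup Γ) : Prop :=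
  ∀ g : Γ, (H : Set Γ) * {g} * (G : Set Γ) = (H : Set Γ) * {g} * (G' : Set Γ)

/-- `K` is the `𝓗`-closure of `G`: the greatest overgroup of `G` that is `𝓗`-equivalent
to `G`. -/
def IsHConjClosure {Γ : Type*} [Group Γ] (H G K : Subgroup Γ) : Prop :=
  G ≤ K ∧ HConjEquiv H K G ∧ ∀ K' : Subgroup Γ, G ≤ K' → HConjEquiv H K' G → K' ≤ K

/-- `G` is `𝓗`-closed: the only overgroup of `G` that is `𝓗`-equivalent to `G` is `G`
itself. -/
def IsHConjClosed {Γ : Type*} [Group Γ] (H G : Subgroup Γ) : Prop :=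
  ∀ G' : Subgroup Γ, G ≤ G' → HConjEquiv H G' G → G' = G

/-- Joining the normal core of `H` to any subgroup does not change `𝓗`-equivalence class. -/
lemma hConjEquiv_sup_normalCore {Γ : Type*} [Group Γ] (H K : Subgroup Γ) :
    HConjEquiv H (H.normalCore ⊔ K) K := by
  intro g
  have hNH : H.normalCore ≤ H := Subgroup.normalCore_le H
  rw [Subgroup.normal_mul]
  calc (H : Set Γ) * {g} * ((H.normalCore : Set Γ) * (K : Set Γ))
      = (H : Set Γ) * ({g} * (H.normalCore : Set Γ)) * (K : Set Γ) := by
        simp only [mul_assoc]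
    _ = (H : Set Γ) * ((H.normalCore : Set Γ) * {g}) * (K : Set Γ) := by
        rw [Subgroup.set_mul_normal_comm {g} H.normalCore]
    _ = ((H : Set Γ) * (H.normalCore : Set Γ)) * {g} * (K : Set Γ) := by
        simp only [mul_assoc]
    _ = (H : Set Γ) * {g} * (K : Set Γ) := by
        rw [← Subgroup.mul_normal, sup_eq_left.mpr hNH]

/-- Let `Γ` be a compact topological group and `H` an open subgroup.
Then the normal core `⋂ g, g·H·g⁻¹` of `H` is an open normal subgroup; every `𝓗`-closed
subgroup of `Γ` contains it and is open; there are only finitely many `𝓗`-closed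
subgroups of `Γ`; and the `𝓗`-closure of any subgroup of `Γ` is open. -/
theorem hConjClosed_open_and_finite {Γ : Type*} [Group Γ] [TopologicalSpace Γ]
    [IsTopologicalGroup Γ] [CompactSpace Γ] (H : Subgroup Γ) (hH : IsOpen (H : Set Γ)) :
    IsOpen ((H.normalCore : Subgroup Γ) : Set Γ) ∧
    (∀ G : Subgroup Γ, IsHConjClosed H G → H.normalCore ≤ G ∧ IsOpen (G : Set Γ)) ∧
    {G : Subgroup Γ | IsHConjClosed H G}.Finite ∧
    (∀ G K : Subgroup Γ, IsHConjClosure H G K → IsOpen (K : Set Γ)) := by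
  have hHfin : Finite (Γ ⧸ H) := Subgroup.quotient_finite_of_isOpen H hH
  have : H.FiniteIndex := Subgroup.finiteIndex_of_finite_quotient (H := H)
  have hNopen : IsOpen ((H.normalCore : Subgroup Γ) : Set Γ) :=
    Subgroup.isOpen_of_isClosed_of_finiteIndex _
      (Subgroup.normalCore_isClosed H (H.isClosed_of_isOpen hH))
  -- every 𝓗-closed subgroup contains the normal core
  have hcore : ∀ G : Subgroup Γ, IsHConjClosed H G → H.normalCore ≤ G := by
    intro G hG
    have h1 : G ≤ H.normalCore ⊔ G := le_sup_right
    have h2 : H.normalCore ⊔ G = G := hG _ h1 (hConjEquiv_sup_normalCore H G)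
    exact sup_eq_right.mp h2
  refine ⟨hNopen, fun G hG => ⟨hcore G hG, Subgroup.isOpen_mono (hcore G hG) hNopen⟩, ?_, ?_⟩
  · -- finiteness
    have hNfin : Finite (Γ ⧸ H.normalCore) :=
      Subgroup.quotient_finite_of_isOpen _ hNopen
    have hfinsub : Finite (Subgroup (Γ ⧸ H.normalCore)) :=
      Finite.of_injective (fun S => (S : Set (Γ ⧸ H.normalCore))) SetLike.coe_injective
    apply Set.Finite.of_finite_image (f := Subgroup.map (QuotientGroup.mk' H.normalCore))
      (Set.toFinite _)
    intro G hGmem G' hG'mem hEq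
    have h1 : Subgroup.comap (QuotientGroup.mk' H.normalCore)
        (Subgroup.map (QuotientGroup.mk' H.normalCore) G) = G := by
      apply Subgroup.comap_map_eq_self
      rw [QuotientGroup.ker_mk']
      exact hcore G hGmem
    have h2 : Subgroup.comap (QuotientGroup.mk' H.normalCore)
        (Subgroup.map (QuotientGroup.mk' H.normalCore) G') = G' := by
      apply Subgroup.comap_map_eq_self
      rw [QuotientGroup.ker_mk']
      exact hcore G' hG'mem
    rw [← h1, ← h2, hEq]
  · -- 𝓗-closure is open
    intro G K hK
    obtain ⟨hGK, hKG, hmax⟩ := hK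
    have hle : H.normalCore ⊔ K ≤ K := by
      apply hmax
      · exact le_trans hGK le_sup_right
      · intro g
        rw [hConjEquiv_sup_normalCore H K g, hKG g]
    have : H.normalCore ≤ K := le_trans le_sup_left hle
    exact Subgroup.isOpen_mono this hNopen
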